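/- The curve C₆ = {F₆ = 0} ⊂ P² (with F₆ as in the Appendix) has a node (ordinary double point) at the point p₀ = [0:0:1]. -/
import Mathlib


open MvPolynomial

/-- F₆ in the affine chart z = 1, in coordinates centered at p₀ = [0:0:1]. -/
noncomputable def f₆ : MvPolynomial (Fin 2) ℚ :=
  let x : MvPolynomial (Fin 2) ℚ := X 0
  let y : MvPolynomial (Fin 2) ℚ := X 1
  4*x^6 - 273*x^4*y^2 - 258*x^2*y^4 - 481*y^6 + 720*x^4*y + 1740*x^2*y^3 +
  4020*y^5 - 520*x^4 - 3190*x^2*y^2 - 12670*y^4 + 1200*x^2*y +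
  17700*y^3 + 900*x^2 - 9225*y^2

noncomputable def q2 : MvPolynomial (Fin 2) ℚ := C 900 * X 0^2 - C 9225 * X 1^2
noncomputable def q3 : MvPolynomial (Fin 2) ℚ := C 1200 * X 0^2 * X 1 + C 17700 * X 1^3
noncomputable def q4 : MvPolynomial (Fin 2) ℚ :=
  - (C 520 * X 0^4) - C 3190 * X 0^2 * X 1^2 - C 12670 * X 1^4
noncomputable def q5 : MvPolynomial (Fin 2) ℚ :=
  C 720 * X 0^4 * X 1 + C 1740 * X 0^2 * X 1^3 + C 4020 * X 1^5
noncomputable def q6 : MvPolynomial (Fin 2) ℚ :=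
  C 4 * X 0^6 - C 273 * X 0^4 * X 1^2 - C 258 * X 0^2 * X 1^4 - C 481 * X 1^6

lemma mon_hom (c : ℚ) (a b : ℕ) :
    ((C c * (X 0^a * X 1^b) : MvPolynomial (Fin 2) ℚ)).IsHomogeneous (a + b) := by
  apply MvPolynomial.IsHomogeneous.C_mul
  simpa using ((isHomogeneous_X ℚ _).pow a).mul ((isHomogeneous_X ℚ _).pow b)

lemma hq2 : q2.IsHomogeneous 2 := by
  have h1 := mon_hom 900 2 0
  have h2 := mon_hom 9225 0 2
  simp only [pow_zero, mul_one, one_mul] at h1 h2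
  simpa [q2] using h1.sub h2
lemma hq3 : q3.IsHomogeneous 3 := by
  have h1 := mon_hom 1200 2 1
  have h2 := mon_hom 17700 0 3
  simp only [pow_zero, pow_one, mul_one, one_mul] at h1 h2
  simpa [q3, mul_assoc] using h1.add h2
lemma hq4 : q4.IsHomogeneous 4 := by
  have h1 := mon_hom 520 4 0
  have h2 := mon_hom 3190 2 2
  have h3 := mon_hom 12670 0 4
  simp only [pow_zero, mul_one, one_mul] at h1 h2 h3
  simpa [q4, mul_assoc] using (h1.neg.sub h2).sub h3
lemma hq5 : q5.IsHomogeneous 5 := by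
  have h1 := mon_hom 720 4 1
  have h2 := mon_hom 1740 2 3
  have h3 := mon_hom 4020 0 5
  simp only [pow_zero, pow_one, mul_one, one_mul] at h1 h2 h3
  simpa [q5, mul_assoc] using (h1.add h2).add h3
lemma hq6 : q6.IsHomogeneous 6 := by
  have h1 := mon_hom 4 6 0
  have h2 := mon_hom 273 4 2
  have h3 := mon_hom 258 2 4
  have h4 := mon_hom 481 0 6
  simp only [pow_zero, mul_one, one_mul] at h1 h2 h3 h4
  simpa [q6, mul_assoc] using ((h1.sub h2).sub h3).sub h4

lemma f₆_eq : f₆ = q6 + q5 + q4 + q3 + q2 := by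
  simp only [f₆, q2, q3, q4, q5, q6, map_ofNat]
  ring

lemma hc_f₆ (n : ℕ) :
    homogeneousComponent n f₆ =
      (if n = 6 then q6 else 0) + (if n = 5 then q5 else 0) + (if n = 4 then q4 else 0) +
      (if n = 3 then q3 else 0) + (if n = 2 then q2 else 0) := by
  rw [f₆_eq]
  simp only [map_add, homogeneousComponent_of_mem hq6, homogeneousComponent_of_mem hq5,
    homogeneousComponent_of_mem hq4, homogeneousComponent_of_mem hq3,
    homogeneousComponent_of_mem hq2]

lemma coeff_q2_x2 : coeff (Finsupp.single (0 : Fin 2) 2) q2 = 900 := by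
  simp [q2, coeff_sub, coeff_C_mul, coeff_X_pow, Finsupp.single_eq_single_iff]
lemma coeff_q2_y2 : coeff (Finsupp.single (1 : Fin 2) 2) q2 = -9225 := by
  simp [q2, coeff_sub, coeff_C_mul, coeff_X_pow, Finsupp.single_eq_single_iff]
lemma coeff_q2_xy :
    coeff (Finsupp.single (0 : Fin 2) 1 + Finsupp.single (1 : Fin 2) 1) q2 = 0 := by
  have h0 : (Finsupp.single (0 : Fin 2) 1 + Finsupp.single (1 : Fin 2) 1) ≠
      Finsupp.single (0 : Fin 2) 2 := by
    intro h
    have := DFunLike.congr_fun h 1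
    simp at this
  have h1 : (Finsupp.single (0 : Fin 2) 1 + Finsupp.single (1 : Fin 2) 1) ≠
      Finsupp.single (1 : Fin 2) 2 := by
    intro h
    have := DFunLike.congr_fun h 0
    simp at this
  simp [q2, coeff_sub, coeff_C_mul, coeff_X_pow, h0.symm, h1.symm]

/-- C₆ has a node at p₀ = [0:0:1]: multiplicity exactly 2, and the degree-2 part
a·x² + b·xy + c·y² is a nondegenerate quadratic form (b² - 4ac ≠ 0). -/
theorem stmt15 :
    homogeneousComponent 0 f₆ = 0 ∧
    homogeneousComponent 1 f₆ = 0 ∧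
    homogeneousComponent 2 f₆ ≠ 0 ∧
    (coeff (Finsupp.single (0 : Fin 2) 1 + Finsupp.single (1 : Fin 2) 1)
        (homogeneousComponent 2 f₆)) ^ 2 -
      4 * coeff (Finsupp.single (0 : Fin 2) 2) (homogeneousComponent 2 f₆) *
        coeff (Finsupp.single (1 : Fin 2) 2) (homogeneousComponent 2 f₆) ≠ 0 := by
  have h2 : homogeneousComponent 2 f₆ = q2 := by simp [hc_f₆]
  refine ⟨by rw [hc_f₆]; norm_num, by rw [hc_f₆]; norm_num, ?_, ?_⟩
  · rw [h2]
    intro h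
    have := congrArg (coeff (Finsupp.single (0 : Fin 2) 2)) h
    rw [coeff_q2_x2] at this
    simp at this
  · rw [h2, coeff_q2_x2, coeff_q2_y2, coeff_q2_xy]
    norm_num
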